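/- Assume σ is a d-dimensional simplicial cone, i.e. n = d and v_1, …, v_d are linearly independent. Let A, B ⊆ σ^∨ ∩ ℤ^d be finite nonempty sets such that σ^∨ \ Q(B) is bounded (equivalently, the monomial ideal with exponent set B is primary to the maximal monomial ideal). Then sup_{u ∈ σ^∨ \ Q(B)} λ_A(u) is a rational number. -/

import Mathlib

open Finset Filter Pointwise

noncomputable section

namespace Paper

variable {d n : ℕ}

/-- The standard inner product pairing on `ℝ^d`. -/
def pair (u w : Fin d → ℝ) : ℝ := ∑ i, u i * w i

/-- The coercion `ℤ^d → ℝ^d`. -/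
def toR (u : Fin d → ℤ) : Fin d → ℝ := fun i => (u i : ℝ)

/-- The cone generated by the integer vectors `v 1, …, v n`. -/
def cone (v : Fin n → Fin d → ℤ) : Set (Fin d → ℝ) :=
  {x | ∃ c : Fin n → ℝ, (∀ j, 0 ≤ c j) ∧ x = ∑ j, c j • toR (v j)}

/-- The dual cone `σ^∨ = {u | ⟨u, x⟩ ≥ 0 for all x ∈ σ}`. -/
def dualCone (v : Fin n → Fin d → ℤ) : Set (Fin d → ℝ) :=
  {u | ∀ x ∈ cone v, 0 ≤ pair u x}

/-- Strong convexity of the cone generated by `v`. -/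
def StronglyConvex (v : Fin n → Fin d → ℤ) : Prop :=
  ∀ x ∈ cone v, -x ∈ cone v → x = 0

/-- An integer vector is primitive if the gcd of its coordinates is 1. -/
def IsPrimitive (w : Fin d → ℤ) : Prop := Finset.univ.gcd w = 1

/-- The cone generated by `v` is `d`-dimensional. -/
def FullDim (v : Fin n → Fin d → ℤ) : Prop :=
  Submodule.span ℝ (Set.range fun j => toR (v j)) = ⊤

/-- The Newton polyhedron `P(A) = conv(A) + σ^∨`. -/
def newton (v : Fin n → Fin d → ℤ) (A : Finset (Fin d → ℤ)) : Set (Fin d → ℝ) :=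
  convexHull ℝ (toR '' ↑A) + dualCone v

/-- The set `Q(A) = ⋃_{a ∈ A} (a + σ^∨)`. -/
def QSet (v : Fin n → Fin d → ℤ) (A : Finset (Fin d → ℤ)) : Set (Fin d → ℝ) :=
  ⋃ a ∈ A, (toR a +ᵥ dualCone v)

/-- `λ_A(u) = sup {λ > 0 | u ∈ λ·P(A)}` (and `0` if no such `λ` exists;
note `Real.sSup` of the empty set is `0`). -/
def lam (v : Fin n → Fin d → ℤ) (A : Finset (Fin d → ℤ)) (u : Fin d → ℝ) : ℝ :=
  sSup {l : ℝ | 0 < l ∧ u ∈ l • newton v A}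

/-- `Q(m)` for the maximal monomial ideal, whose exponent set is
`(σ^∨ ∩ ℤ^d) \ {0}`. -/
def Qm (v : Fin n → Fin d → ℤ) : Set (Fin d → ℝ) :=
  ⋃ a ∈ {a : Fin d → ℤ | toR a ∈ dualCone v ∧ a ≠ 0}, (toR a +ᵥ dualCone v)

/-- The set `O = {u ∈ σ^∨ | ⟨u, v_j⟩ ≥ 1 for some j}`. -/
def OSet (v : Fin n → Fin d → ℤ) : Set (Fin d → ℝ) :=
  {u ∈ dualCone v | ∃ j, 1 ≤ pair u (toR (v j))}


lemma pair_eq_dot (u w : Fin d → ℝ) : pair u w = dotProduct u w := rfl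

lemma pair_add_left (u u' w : Fin d → ℝ) : pair (u + u') w = pair u w + pair u' w := by
  simp [pair_eq_dot, add_dotProduct]

lemma pair_sub_left (u u' w : Fin d → ℝ) : pair (u - u') w = pair u w - pair u' w := by
  simp [pair_eq_dot, sub_dotProduct]

lemma pair_smul_left (c : ℝ) (u w : Fin d → ℝ) : pair (c • u) w = c * pair u w := by
  simp [pair_eq_dot, smul_dotProduct]

lemma pair_self_eq_zero {u : Fin d → ℝ} : pair u u = 0 ↔ u = 0 := by
  simp [pair_eq_dot, dotProduct_self_eq_zero]

lemma pair_smul_right (c : ℝ) (u w : Fin d → ℝ) : pair u (c • w) = c * pair u w := by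
  simp [pair_eq_dot, dotProduct_smul]

lemma pair_sum_right {ι : Type*} (s : Finset ι) (u : Fin d → ℝ) (f : ι → Fin d → ℝ) :
    pair u (∑ j ∈ s, f j) = ∑ j ∈ s, pair u (f j) := by
  simp only [pair, Finset.sum_apply, Finset.mul_sum]
  exact Finset.sum_comm

lemma pair_sum_left {ι : Type*} (s : Finset ι) (u : Fin d → ℝ) (f : ι → Fin d → ℝ) :
    pair (∑ j ∈ s, f j) u = ∑ j ∈ s, pair (f j) u := by
  simp only [pair, Finset.sum_apply, Finset.sum_mul]
  exact Finset.sum_comm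

variable (v : Fin n → Fin d → ℤ)

lemma mem_dualCone_iff (u : Fin d → ℝ) :
    u ∈ dualCone v ↔ ∀ j, 0 ≤ pair u (toR (v j)) := by
  constructor
  · intro h j
    refine h _ ⟨fun i => if i = j then 1 else 0, fun i => by positivity, ?_⟩
    simp [Finset.sum_ite_eq']
  · intro h x hx
    obtain ⟨c, hc, rfl⟩ := hx
    rw [pair_sum_right]
    exact Finset.sum_nonneg fun j _ => by
      rw [pair_smul_right]; exact mul_nonneg (hc j) (h j)

lemma pair_comm (u w : Fin d → ℝ) : pair u w = pair w u := by
  simp [pair, mul_comm]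

lemma toR_injective : Function.Injective (toR (d := d)) := by
  intro a b h
  funext i
  have := congrFun h i
  simp only [toR] at this
  exact_mod_cast this

lemma toR_eq_zero {a : Fin d → ℤ} : toR a = 0 ↔ a = 0 := by
  constructor
  · intro h; funext i; have := congrFun h i; simpa [toR] using this
  · rintro rfl; funext i; simp [toR]

section T
variable {d : ℕ} (v : Fin d → Fin d → ℤ)

def Tmap : (Fin d → ℝ) →ₗ[ℝ] (Fin d → ℝ) where
  toFun u := fun j => pair u (toR (v j))
  map_add' u u' := by funext j; simp [pair_add_left]
  map_smul' c u := by funext j; simp [pair_smul_left]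

/-- functional w ↦ pair u w -/
def dotRight (u : Fin d → ℝ) : (Fin d → ℝ) →ₗ[ℝ] ℝ where
  toFun w := pair u w
  map_add' w w' := by
    show pair u (w + w') = pair u w + pair u w'
    rw [pair_comm, pair_add_left, pair_comm w, pair_comm w']
  map_smul' c w := by
    show pair u (c • w) = c • pair u w
    rw [pair_comm, pair_smul_left, pair_comm w, smul_eq_mul]

lemma Tmap_injective (hd : 0 < d) (hli : LinearIndependent ℝ fun j => toR (v j)) :
    Function.Injective (Tmap v) := by
  haveI : Nonempty (Fin d) := ⟨⟨0, hd⟩⟩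
  have hspan : Submodule.span ℝ (Set.range fun j => toR (v j)) = ⊤ :=
    hli.span_eq_top_of_card_eq_finrank (by simp [Module.finrank_fintype_fun_eq_card])
  rw [← LinearMap.ker_eq_bot, LinearMap.ker_eq_bot']
  intro u hu
  have h0 : ∀ j, pair u (toR (v j)) = 0 := fun j => congrFun hu j
  have hker : ∀ w ∈ Submodule.span ℝ (Set.range fun j => toR (v j)), dotRight u w = 0 := by
    intro w hw
    refine Submodule.span_induction ?_ ?_ ?_ ?_ hw
    · rintro w ⟨j, rfl⟩; exact h0 j
    · simp
    · intro a b _ _ ha hb; simp [map_add, ha, hb]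
    · intro c a _ ha; simp [map_smul, ha]
  have := hker u (hspan ▸ Submodule.mem_top)
  exact pair_self_eq_zero.mp this

lemma Tmap_exists_preimage (hd : 0 < d) (hli : LinearIndependent ℝ fun j => toR (v j))
    (g : Fin d → ℝ) :
    ∃ u : Fin d → ℝ, ∀ j, pair u (toR (v j)) = g j := by
  obtain ⟨u, hu⟩ := LinearMap.surjective_of_injective (Tmap_injective v hd hli) g
  exact ⟨u, fun j => congrFun hu j⟩

end T

section Chars
variable {d : ℕ} (v : Fin d → Fin d → ℤ)

lemma mem_QSet_iff (B : Finset (Fin d → ℤ)) (u : Fin d → ℝ) :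
    u ∈ QSet v B ↔ ∃ b ∈ B, ∀ j, pair (toR b) (toR (v j)) ≤ pair u (toR (v j)) := by
  unfold QSet
  rw [Set.mem_iUnion₂]
  constructor
  · rintro ⟨b, hb, hmem⟩
    rw [Set.mem_vadd_set] at hmem
    obtain ⟨y, hy, hxy⟩ := hmem
    have hxy' : toR b + y = u := hxy
    refine ⟨b, hb, fun j => ?_⟩
    rw [← hxy', pair_add_left]
    have := (mem_dualCone_iff v y).mp hy j
    linarith
  · rintro ⟨b, hb, hj⟩
    refine ⟨b, hb, u - toR b, ?_, by simp⟩
    rw [mem_dualCone_iff]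
    intro j
    rw [pair_sub_left]
    linarith [hj j]

lemma mem_newton_iff (A : Finset (Fin d → ℤ)) (x : Fin d → ℝ) :
    x ∈ newton v A ↔ ∃ c : (Fin d → ℤ) → ℝ, (∀ a ∈ A, 0 ≤ c a) ∧ (∑ a ∈ A, c a = 1) ∧
      ∀ j, ∑ a ∈ A, c a * pair (toR a) (toR (v j)) ≤ pair x (toR (v j)) := by
  classical
  constructor
  · intro hx
    obtain ⟨y, hy, z, hz, rfl⟩ := Set.mem_add.mp hx
    rw [← Finset.coe_image, Finset.convexHull_eq] at hy
    obtain ⟨w, hw0, hw1, hwc⟩ := hy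
    have himg : ∀ f : (Fin d → ℝ) → ℝ, ∑ p ∈ A.image toR, f p = ∑ a ∈ A, f (toR a) :=
      fun f => Finset.sum_image (fun a _ b _ h => toR_injective h)
    refine ⟨fun a => w (toR a), fun a ha => hw0 _ (Finset.mem_image_of_mem _ ha), ?_, ?_⟩
    · rw [← himg]; exact hw1
    · intro j
      have hyeq : y = ∑ p ∈ A.image toR, w p • p := by
        rw [← hwc, Finset.centerMass_eq_of_sum_1 _ _ hw1]; rfl
      have heq : pair y (toR (v j)) = ∑ a ∈ A, w (toR a) * pair (toR a) (toR (v j)) := by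
        rw [hyeq, pair_sum_left, himg (fun p => pair (w p • p) (toR (v j)))]
        exact Finset.sum_congr rfl fun p _ => pair_smul_left _ _ _
      rw [pair_add_left, ← heq]
      have := (mem_dualCone_iff v z).mp hz j
      linarith
  · rintro ⟨c, hc0, hc1, hcj⟩
    set y : Fin d → ℝ := ∑ a ∈ A, c a • toR a with hy
    have hyc : y ∈ convexHull ℝ (toR '' ↑A) := by
      have := A.centerMass_mem_convexHull (w := c) (z := toR)
        (fun a ha => hc0 a ha) (by rw [hc1]; norm_num)
        (fun a ha => Set.mem_image_of_mem _ (Finset.mem_coe.mpr ha))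
      rwa [Finset.centerMass_eq_of_sum_1 _ _ hc1] at this
    have hpy : ∀ j, pair y (toR (v j)) = ∑ a ∈ A, c a * pair (toR a) (toR (v j)) := by
      intro j
      rw [hy, pair_sum_left]
      exact Finset.sum_congr rfl fun a _ => pair_smul_left _ _ _
    refine Set.mem_add.mpr ⟨y, hyc, x - y, ?_, by ring⟩
    rw [mem_dualCone_iff]
    intro j
    rw [pair_sub_left, hpy j]
    linarith [hcj j]

end Chars

section LSet
variable {d : ℕ} (v : Fin d → Fin d → ℤ) (A : Finset (Fin d → ℤ))

def LSet (u : Fin d → ℝ) : Set ℝ := {l : ℝ | 0 < l ∧ u ∈ l • newton v A}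

lemma lam_eq_sSup_LSet (u : Fin d → ℝ) : lam v A u = sSup (LSet v A u) := rfl

lemma mem_LSet_iff (u : Fin d → ℝ) (l : ℝ) :
    l ∈ LSet v A u ↔ 0 < l ∧ ∃ c : (Fin d → ℤ) → ℝ, (∀ a ∈ A, 0 ≤ c a) ∧
      (∑ a ∈ A, c a = 1) ∧
      ∀ j, l * ∑ a ∈ A, c a * pair (toR a) (toR (v j)) ≤ pair u (toR (v j)) := by
  unfold LSet
  rw [Set.mem_setOf_eq]
  constructor
  · rintro ⟨hl, hu⟩
    refine ⟨hl, ?_⟩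
    rw [Set.mem_smul_set_iff_inv_smul_mem₀ (ne_of_gt hl)] at hu
    obtain ⟨c, h0, h1, hj⟩ := (mem_newton_iff v A _).mp hu
    refine ⟨c, h0, h1, fun j => ?_⟩
    have hj' := hj j
    rw [pair_smul_left] at hj'
    have := (mul_le_mul_iff_right₀ hl).mpr hj'
    rwa [← mul_assoc, mul_inv_cancel₀ (ne_of_gt hl), one_mul] at this
  · rintro ⟨hl, c, h0, h1, hj⟩
    refine ⟨hl, ?_⟩
    rw [Set.mem_smul_set_iff_inv_smul_mem₀ (ne_of_gt hl)]
    refine (mem_newton_iff v A _).mpr ⟨c, h0, h1, fun j => ?_⟩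
    rw [pair_smul_left]
    have := (mul_le_mul_iff_right₀ (inv_pos.mpr hl)).mpr (hj j)
    rwa [← mul_assoc, inv_mul_cancel₀ (ne_of_gt hl), one_mul] at this

lemma lam_nonneg (u : Fin d → ℝ) : 0 ≤ lam v A u :=
  Real.sSup_nonneg (fun _ hx => le_of_lt hx.1)

lemma pair_zero_left (w : Fin d → ℝ) : pair 0 w = 0 := by simp [pair]

lemma lam_of_zero_mem (hA0 : (0 : Fin d → ℤ) ∈ A) {u : Fin d → ℝ}
    (hu : u ∈ dualCone v) : lam v A u = 0 := by
  classical
  have hL : LSet v A u = Set.Ioi 0 := by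
    ext l
    simp only [Set.mem_Ioi]
    constructor
    · exact fun h => ((mem_LSet_iff v A u l).mp h).1
    · intro hl
      refine (mem_LSet_iff v A u l).mpr ⟨hl, fun a => if a = 0 then 1 else 0, ?_, ?_, ?_⟩
      · intro a _; positivity
      · rw [Finset.sum_ite_eq' A 0 (fun _ => 1)]
        simp [hA0]
      · intro j
        have : ∑ a ∈ A, (if a = 0 then (1:ℝ) else 0) * pair (toR a) (toR (v j)) = 0 := by
          rw [Finset.sum_eq_single (0 : Fin d → ℤ)]
          · have : toR (0 : Fin d → ℤ) = 0 := toR_eq_zero.mpr rfl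
            simp [this, pair_zero_left]
          · intro b _ hb; simp [hb]
          · intro h; exact absurd hA0 h
        rw [this, mul_zero]
        exact (mem_dualCone_iff v u).mp hu j
  rw [lam_eq_sSup_LSet, hL, csSup_of_not_bddAbove (not_bddAbove_Ioi (0:ℝ)), Real.sSup_empty]

lemma colsum_ge_one (hd : 0 < d) (hli : LinearIndependent ℝ fun j => toR (v j))
    (hAl : ∀ a ∈ A, toR a ∈ dualCone v) (hA0 : (0 : Fin d → ℤ) ∉ A) :
    ∀ a ∈ A, 1 ≤ ∑ j, pair (toR a) (toR (v j)) := by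
  intro a ha
  set z : Fin d → ℤ := fun j => ∑ i, a i * v j i with hzdef
  have heq : ∀ j, pair (toR a) (toR (v j)) = (z j : ℝ) := by
    intro j
    simp only [pair, toR, hzdef]
    push_cast
    ring
  have hz0 : ∀ j, 0 ≤ z j := by
    intro j
    have := (mem_dualCone_iff v _).mp (hAl a ha) j
    rw [heq j] at this
    exact_mod_cast this
  have hne : ¬(∀ j, z j = 0) := by
    intro hall
    have hT : toR a = 0 := by
      apply Tmap_injective v hd hli
      rw [map_zero]
      funext j
      show pair (toR a) (toR (v j)) = 0
      rw [heq j, hall j, Int.cast_zero]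
    exact hA0 (toR_eq_zero.mp hT ▸ ha)
  have hsum : 0 < ∑ j, z j := by
    rcases lt_or_eq_of_le (Finset.sum_nonneg fun j _ => hz0 j) with h | h
    · exact h
    · exfalso
      apply hne
      intro j
      have := (Finset.sum_eq_zero_iff_of_nonneg (fun j _ => hz0 j)).mp h.symm
      exact this j (Finset.mem_univ j)
  have : (1 : ℝ) ≤ ((∑ j, z j : ℤ) : ℝ) := by exact_mod_cast hsum
  calc (1:ℝ) ≤ ((∑ j, z j : ℤ) : ℝ) := this
  _ = ∑ j, pair (toR a) (toR (v j)) := by push_cast; exact (Finset.sum_congr rfl fun j _ => (heq j).symm)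

lemma LSet_le_sum (hd : 0 < d) (hli : LinearIndependent ℝ fun j => toR (v j))
    (hAl : ∀ a ∈ A, toR a ∈ dualCone v) (hA0 : (0 : Fin d → ℤ) ∉ A)
    {u : Fin d → ℝ} {l : ℝ} (hl : l ∈ LSet v A u) :
    l ≤ ∑ j, pair u (toR (v j)) := by
  obtain ⟨hlpos, c, hc0, hc1, hcj⟩ := (mem_LSet_iff v A u l).mp hl
  have h1 : ∑ j, l * ∑ a ∈ A, c a * pair (toR a) (toR (v j)) ≤ ∑ j, pair u (toR (v j)) :=
    Finset.sum_le_sum (fun j _ => hcj j)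
  have h2 : ∑ j, l * ∑ a ∈ A, c a * pair (toR a) (toR (v j))
      = l * ∑ a ∈ A, c a * ∑ j, pair (toR a) (toR (v j)) := by
    rw [← Finset.mul_sum, Finset.sum_comm]
    congr 1
    exact Finset.sum_congr rfl fun a _ => (Finset.mul_sum _ _ _).symm
  have h3 : 1 ≤ ∑ a ∈ A, c a * ∑ j, pair (toR a) (toR (v j)) := by
    calc (1:ℝ) = ∑ a ∈ A, c a * 1 := by simp [hc1]
    _ ≤ ∑ a ∈ A, c a * ∑ j, pair (toR a) (toR (v j)) :=
      Finset.sum_le_sum fun a ha =>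
        mul_le_mul_of_nonneg_left (colsum_ge_one v A hd hli hAl hA0 a ha) (hc0 a ha)
  calc l = l * 1 := (mul_one l).symm
  _ ≤ l * ∑ a ∈ A, c a * ∑ j, pair (toR a) (toR (v j)) :=
      mul_le_mul_of_nonneg_left h3 hlpos.le
  _ ≤ ∑ j, pair u (toR (v j)) := h2 ▸ h1

lemma LSet_mono {u u' : Fin d → ℝ}
    (h : ∀ j, pair u (toR (v j)) ≤ pair u' (toR (v j))) : LSet v A u ⊆ LSet v A u' := by
  intro l hl
  obtain ⟨hlpos, c, hc0, hc1, hcj⟩ := (mem_LSet_iff v A u l).mp hl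
  exact (mem_LSet_iff v A u' l).mpr ⟨hlpos, c, hc0, hc1, fun j => le_trans (hcj j) (h j)⟩

lemma LSet_smul {θ : ℝ} (hθ : 0 < θ) {u : Fin d → ℝ} {l : ℝ} (hl : l ∈ LSet v A u) :
    θ * l ∈ LSet v A (θ • u) := by
  obtain ⟨hlpos, c, hc0, hc1, hcj⟩ := (mem_LSet_iff v A u l).mp hl
  refine (mem_LSet_iff v A _ _).mpr ⟨by positivity, c, hc0, hc1, fun j => ?_⟩
  rw [pair_smul_left, mul_assoc]
  exact mul_le_mul_of_nonneg_left (hcj j) hθ.le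

lemma real_sSup_mul_image {θ : ℝ} (hθ : 0 < θ) (L : Set ℝ) :
    sSup ((fun l => θ * l) '' L) = θ * sSup L := by
  rcases L.eq_empty_or_nonempty with rfl | hne
  · simp [Real.sSup_empty]
  by_cases hbdd : BddAbove L
  · apply le_antisymm
    · apply csSup_le (hne.image _)
      rintro x ⟨l, hl, rfl⟩
      exact mul_le_mul_of_nonneg_left (le_csSup hbdd hl) hθ.le
    · rw [mul_comm, ← le_div_iff₀ hθ]
      apply csSup_le hne
      intro l hl
      rw [le_div_iff₀ hθ, mul_comm]
      refine le_csSup ?_ (Set.mem_image_of_mem _ hl)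
      obtain ⟨M, hM⟩ := hbdd
      refine ⟨θ * M, ?_⟩
      rintro x ⟨l', hl', rfl⟩
      exact mul_le_mul_of_nonneg_left (hM hl') hθ.le
  · have hnb : ¬BddAbove ((fun l => θ * l) '' L) := by
      intro ⟨M, hM⟩
      apply hbdd
      refine ⟨M / θ, fun l hl => ?_⟩
      rw [le_div_iff₀ hθ, mul_comm]
      exact hM (Set.mem_image_of_mem _ hl)
    rw [csSup_of_not_bddAbove hbdd, csSup_of_not_bddAbove hnb, Real.sSup_empty, mul_zero]

lemma lam_smul {θ : ℝ} (hθ : 0 < θ) (u : Fin d → ℝ) :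
    lam v A (θ • u) = θ * lam v A u := by
  have hset : LSet v A (θ • u) = (fun l => θ * l) '' LSet v A u := by
    ext l
    constructor
    · intro hl
      refine ⟨θ⁻¹ * l, ?_, by field_simp⟩
      have := LSet_smul v A (inv_pos.mpr hθ) hl
      rwa [inv_smul_smul₀ (ne_of_gt hθ)] at this
    · rintro ⟨l', hl', rfl⟩
      exact LSet_smul v A hθ hl'
  rw [lam_eq_sSup_LSet, lam_eq_sSup_LSet, hset, real_sSup_mul_image hθ]

end LSet

section LP
open Matrix
variable {m n : Type*} [Fintype m] [Fintype n] [DecidableEq n]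

lemma dot_cast (w x : n → ℚ) :
    ((w ⬝ᵥ x : ℚ) : ℝ) = (fun a => (w a : ℝ)) ⬝ᵥ (fun a => (x a : ℝ)) := by
  simp [dotProduct]

lemma eq_zero_of_dot_span {K : Type*} [Field K] [LinearOrder K] [IsStrictOrderedRing K] {t : Set (n → K)} (x : n → K)
    (htspan : Submodule.span K t = ⊤) (hx : ∀ r ∈ t, r ⬝ᵥ x = 0) : x = 0 := by
  have hall : ∀ y ∈ Submodule.span K t, y ⬝ᵥ x = 0 := by
    intro y hy
    refine Submodule.span_induction (fun r hr => hx r hr) (by simp) ?_ ?_ hy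
    · intro a b _ _ ha hb; rw [add_dotProduct, ha, hb, add_zero]
    · intro c a _ ha; rw [smul_dotProduct, ha, smul_zero]
  have := hall x (htspan ▸ Submodule.mem_top)
  rwa [dotProduct_self_eq_zero] at this

def dotLin {K : Type*} [CommRing K] (w : n → K) : (n → K) →ₗ[K] K where
  toFun x := w ⬝ᵥ x
  map_add' x y := dotProduct_add w x y
  map_smul' c x := by simp [dotProduct_smul]

theorem lp_rational (M : m → n → ℚ) (b : m → ℚ)
    (hM : ∀ i a, 0 ≤ M i a) (hb : ∀ i, 0 ≤ b i) (hcol : ∀ a : n, 1 ≤ ∑ i, M i a) :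
    ∃ q : ℚ, sSup {l : ℝ | 0 < l ∧ ∃ μ : n → ℝ, (∀ a, 0 ≤ μ a) ∧
      (∀ i, ∑ a, μ a * (M i a : ℝ) ≤ (b i : ℝ)) ∧ (∑ a, μ a = l)} = (q : ℝ) := by
  classical
  set S := {l : ℝ | 0 < l ∧ ∃ μ : n → ℝ, (∀ a, 0 ≤ μ a) ∧
      (∀ i, ∑ a, μ a * (M i a : ℝ) ≤ (b i : ℝ)) ∧ (∑ a, μ a = l)} with hS
  set F : Set (n → ℝ) := {μ | (∀ a, 0 ≤ μ a) ∧ ∀ i, ∑ a, μ a * (M i a : ℝ) ≤ (b i : ℝ)}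
    with hF
  have h0F : (0 : n → ℝ) ∈ F := by
    refine ⟨fun a => le_refl 0, fun i => ?_⟩
    simp only [Pi.zero_apply, zero_mul, Finset.sum_const_zero]
    exact_mod_cast hb i
  have hFsub : F ⊆ Set.pi Set.univ (fun _ : n => Set.Icc (0:ℝ) (∑ i, (b i : ℝ))) := by
    rintro μ ⟨hμ0, hμc⟩ a _
    refine ⟨hμ0 a, ?_⟩
    have h1 : μ a ≤ μ a * ∑ i, (M i a : ℝ) := by
      nlinarith [hμ0 a, (by exact_mod_cast hcol a : (1:ℝ) ≤ ∑ i, (M i a : ℝ))]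
    have h2 : μ a * ∑ i, (M i a : ℝ) = ∑ i, μ a * (M i a : ℝ) := Finset.mul_sum _ _ _
    have h3 : ∀ i : m, μ a * (M i a : ℝ) ≤ ∑ a', μ a' * (M i a' : ℝ) := fun i =>
      Finset.single_le_sum (f := fun a' => μ a' * (M i a' : ℝ))
        (fun a' _ => mul_nonneg (hμ0 a') (by exact_mod_cast hM i a')) (Finset.mem_univ a)
    calc μ a ≤ ∑ i, μ a * (M i a : ℝ) := h1.trans_eq h2
    _ ≤ ∑ i, ∑ a', μ a' * (M i a' : ℝ) := Finset.sum_le_sum fun i _ => h3 i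
    _ ≤ ∑ i, (b i : ℝ) := Finset.sum_le_sum fun i _ => hμc i
  have hFclosed : IsClosed F := by
    have hFeq : F = (⋂ a : n, {μ : n → ℝ | 0 ≤ μ a}) ∩
        ⋂ i : m, {μ : n → ℝ | ∑ a, μ a * (M i a : ℝ) ≤ (b i : ℝ)} := by
      ext μ; simp only [hF, Set.mem_setOf_eq, Set.mem_inter_iff, Set.mem_iInter]
    rw [hFeq]
    refine IsClosed.inter (isClosed_iInter fun a => isClosed_le continuous_const
      (continuous_apply a)) (isClosed_iInter fun i => isClosed_le ?_ continuous_const)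
    exact continuous_finset_sum _ fun a _ => (continuous_apply a).mul continuous_const
  have hFcomp : IsCompact F :=
    IsCompact.of_isClosed_subset (isCompact_univ_pi fun _ => isCompact_Icc) hFclosed hFsub
  have hobjcont : Continuous (fun μ : n → ℝ => ∑ a, μ a) :=
    continuous_finset_sum _ fun a _ => continuous_apply a
  obtain ⟨μ0, hμ0F, hmax'⟩ := hFcomp.exists_isMaxOn ⟨0, h0F⟩ hobjcont.continuousOn
  have hmax : ∀ μ ∈ F, ∑ a, μ a ≤ ∑ a, μ0 a := fun μ hμ => hmax' hμ
  set val := ∑ a, μ0 a with hval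
  have hval0 : 0 ≤ val := Finset.sum_nonneg fun a _ => hμ0F.1 a
  rcases eq_or_lt_of_le hval0 with hv | hv
  · refine ⟨0, ?_⟩
    have hSempty : S = ∅ := by
      ext l
      simp only [hS, Set.mem_setOf_eq, Set.mem_empty_iff_false, iff_false, not_and]
      rintro hl ⟨μ, hμ0, hμc, hsum⟩
      have hle := hmax μ ⟨hμ0, hμc⟩
      rw [hsum] at hle
      exact absurd (lt_of_lt_of_le hl hle) (by rw [← hv]; exact lt_irrefl 0)
    rw [hSempty, Real.sSup_empty, Rat.cast_zero]
  have hvalS : val ∈ S := ⟨hv, μ0, hμ0F.1, hμ0F.2, rfl⟩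
  have hub : ∀ l ∈ S, l ≤ val := by
    rintro l ⟨_, μ, hμ0, hμc, rfl⟩
    exact hmax μ ⟨hμ0, hμc⟩
  have hsSup : sSup S = val :=
    le_antisymm (csSup_le ⟨val, hvalS⟩ hub) (le_csSup ⟨val, hub⟩ hvalS)
  suffices hrat : ∃ q : ℚ, val = (q : ℝ) by
    obtain ⟨q, hq⟩ := hrat; exact ⟨q, by rw [hsSup, hq]⟩
  set Fs : Set (n → ℝ) := {μ ∈ F | ∑ a, μ a = val} with hFsdef
  have hFscomp : IsCompact Fs :=
    hFcomp.inter_right (isClosed_eq hobjcont continuous_const)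
  obtain ⟨μs, hμsE⟩ := hFscomp.extremePoints_nonempty ⟨μ0, hμ0F, rfl⟩
  rw [mem_extremePoints] at hμsE
  obtain ⟨⟨hμsF, hμsval⟩, hμsext⟩ := hμsE
  set rowq : (n ⊕ m) → (n → ℚ) := Sum.elim (fun a => Pi.single a 1) (fun i => fun a => M i a)
    with hrowq
  set rhsq : (n ⊕ m) → ℚ := Sum.elim (fun _ => 0) b with hrhsq
  set active : (n ⊕ m) → Prop :=
    Sum.elim (fun a => μs a = 0) (fun i => ∑ a, μs a * (M i a : ℝ) = (b i : ℝ)) with hactive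
  set rowR : (n ⊕ m) → (n → ℝ) := fun i => fun a => (rowq i a : ℝ) with hrowR
  have hrow_single : ∀ a : n, rowR (Sum.inl a) = Pi.single a (1:ℝ) := by
    intro a
    funext a'
    by_cases hc : a' = a
    · subst hc; simp [hrowR, hrowq]
    · simp [hrowR, hrowq, Pi.single_apply, hc]
  have hrow_M : ∀ (i : m) (x : n → ℝ), rowR (Sum.inr i) ⬝ᵥ x = ∑ a, x a * (M i a : ℝ) := by
    intro i x
    simp [hrowR, hrowq, dotProduct, mul_comm]
  have heqn : ∀ i, active i → rowR i ⬝ᵥ μs = (rhsq i : ℝ) := by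
    rintro (a | i) hi
    · rw [hrow_single a, single_dotProduct, one_mul]
      simp only [hactive, Sum.elim_inl] at hi
      simpa [hrhsq] using hi
    · rw [hrow_M i μs]
      simp only [hactive, Sum.elim_inr] at hi
      simpa [hrhsq] using hi
  have hker : ∀ h : n → ℝ, (∀ i, active i → rowR i ⬝ᵥ h = 0) → h = 0 := by
    intro h hh
    by_contra hne
    have hsg : ∀ a : n, μs a = 0 → h a = 0 := by
      intro a ha
      have h0 := hh (Sum.inl a) (by simp only [hactive, Sum.elim_inl]; exact ha)
      rwa [hrow_single a, single_dotProduct, one_mul] at h0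
    have hrw : ∀ i : m, (∑ a, μs a * (M i a : ℝ) = (b i : ℝ)) →
        ∑ a, h a * (M i a : ℝ) = 0 := by
      intro i hi
      have h0 := hh (Sum.inr i) (by simp only [hactive, Sum.elim_inr]; exact hi)
      rwa [hrow_M i h] at h0
    set U : Set (n → ℝ) := {x | (∀ a, μs a ≠ 0 → 0 < x a) ∧
      (∀ i, ∑ a, μs a * (M i a : ℝ) ≠ (b i : ℝ) → ∑ a, x a * (M i a : ℝ) < (b i : ℝ))} with hU
    have hUopen : IsOpen U := by
      have h1 : ∀ a : n, IsOpen {x : n → ℝ | μs a ≠ 0 → 0 < x a} := by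
        intro a
        by_cases hc : μs a = 0
        · have : {x : n → ℝ | μs a ≠ 0 → 0 < x a} = Set.univ := by
            ext x; simp [hc]
          rw [this]; exact isOpen_univ
        · have : {x : n → ℝ | μs a ≠ 0 → 0 < x a} = {x | 0 < x a} := by
            ext x; simp [hc]
          rw [this]; exact isOpen_lt continuous_const (continuous_apply a)
      have h2 : ∀ i : m, IsOpen {x : n → ℝ |
          ∑ a, μs a * (M i a : ℝ) ≠ (b i : ℝ) → ∑ a, x a * (M i a : ℝ) < (b i : ℝ)} := by
        intro i
        by_cases hc : ∑ a, μs a * (M i a : ℝ) = (b i : ℝ)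
        · have : {x : n → ℝ | ∑ a, μs a * (M i a : ℝ) ≠ (b i : ℝ) →
              ∑ a, x a * (M i a : ℝ) < (b i : ℝ)} = Set.univ := by
            ext x; simp [hc]
          rw [this]; exact isOpen_univ
        · have : {x : n → ℝ | ∑ a, μs a * (M i a : ℝ) ≠ (b i : ℝ) →
              ∑ a, x a * (M i a : ℝ) < (b i : ℝ)} = {x | ∑ a, x a * (M i a : ℝ) < (b i : ℝ)} := by
            ext x; simp [hc]
          rw [this]
          exact isOpen_lt (continuous_finset_sum _ fun a _ =>
            (continuous_apply a).mul continuous_const) continuous_const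
      have hUeq : U = (⋂ a : n, {x : n → ℝ | μs a ≠ 0 → 0 < x a}) ∩
          ⋂ i : m, {x : n → ℝ |
            ∑ a, μs a * (M i a : ℝ) ≠ (b i : ℝ) → ∑ a, x a * (M i a : ℝ) < (b i : ℝ)} := by
        ext x
        simp only [hU, Set.mem_setOf_eq, Set.mem_inter_iff, Set.mem_iInter]
      rw [hUeq]
      exact (isOpen_iInter_of_finite h1).inter (isOpen_iInter_of_finite h2)
    have hμsU : μs ∈ U := ⟨fun a ha => lt_of_le_of_ne (hμsF.1 a) (Ne.symm ha),
      fun i hi => lt_of_le_of_ne (hμsF.2 i) hi⟩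
    obtain ⟨ε, hε, hball⟩ := Metric.isOpen_iff.mp hUopen μs hμsU
    set δ : ℝ := ε / (2 * (‖h‖ + 1)) with hδ
    have hδpos : 0 < δ := by positivity
    have hmemball : ∀ s : ℝ, |s| ≤ δ → μs + s • h ∈ Metric.ball μs ε := by
      intro s hs
      rw [Metric.mem_ball, dist_eq_norm]
      have hcanc : μs + s • h - μs = s • h := by abel
      rw [hcanc, norm_smul, Real.norm_eq_abs]
      calc |s| * ‖h‖ ≤ δ * ‖h‖ := mul_le_mul_of_nonneg_right hs (norm_nonneg h)
      _ < ε := by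
        rw [hδ, div_mul_eq_mul_div, div_lt_iff₀ (by positivity)]
        nlinarith [norm_nonneg h, hε]
    have hFmem : ∀ s : ℝ, |s| ≤ δ → μs + s • h ∈ F := by
      intro s hs
      have hU' := hball (hmemball s hs)
      constructor
      · intro a
        by_cases ha : μs a = 0
        · have : (μs + s • h) a = 0 := by simp [ha, hsg a ha]
          rw [this]
        · exact (hU'.1 a ha).le
      · intro i
        by_cases hi : ∑ a, μs a * (M i a : ℝ) = (b i : ℝ)
        · have hexp : ∑ a, (μs + s • h) a * (M i a : ℝ)
              = ∑ a, μs a * (M i a : ℝ) + s * ∑ a, h a * (M i a : ℝ) := by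
            rw [Finset.mul_sum, ← Finset.sum_add_distrib]
            refine Finset.sum_congr rfl fun a _ => ?_
            simp [add_mul, smul_eq_mul, mul_assoc]
          rw [hexp, hrw i hi, mul_zero, add_zero, hi]
        · exact (hU'.2 i hi).le
    set s0 : ℝ := ∑ a, h a with hs0
    have hobj : ∀ s : ℝ, ∑ a, (μs + s • h) a = val + s * s0 := by
      intro s
      rw [hs0, Finset.mul_sum, ← hμsval, ← Finset.sum_add_distrib]
      exact Finset.sum_congr rfl fun a _ => by simp [smul_eq_mul]
    rcases eq_or_ne s0 0 with hs0eq | hs0ne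
    · have hp : μs + δ • h ∈ Fs :=
        ⟨hFmem δ (by rw [abs_of_pos hδpos]), by rw [hobj, hs0eq, mul_zero, add_zero]⟩
      have hm : μs + (-δ) • h ∈ Fs :=
        ⟨hFmem (-δ) (by rw [abs_neg, abs_of_pos hδpos]), by rw [hobj, hs0eq, mul_zero, add_zero]⟩
      have hseg : μs ∈ openSegment ℝ (μs + δ • h) (μs + (-δ) • h) := by
        refine ⟨1/2, 1/2, by norm_num, by norm_num, by norm_num, ?_⟩
        module
      obtain ⟨h1, -⟩ := hμsext _ hp _ hm hseg
      apply hne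
      have hzero : δ • h = 0 := by
        have := h1
        rwa [add_eq_left] at this
      rcases smul_eq_zero.mp hzero with h' | h'
      · exact absurd h' (ne_of_gt hδpos)
      · exact h'
    · set s1 : ℝ := if 0 < s0 then δ else -δ with hs1
      have habs : |s1| ≤ δ := by
        rw [hs1]; split
        · rw [abs_of_pos hδpos]
        · rw [abs_neg, abs_of_pos hδpos]
      have hmem := hFmem s1 habs
      have hle := hmax _ hmem
      rw [hobj] at hle
      have hpos : 0 < s1 * s0 := by
        rcases lt_trichotomy s0 0 with h' | h' | h'
        · rw [hs1, if_neg (by linarith)]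
          exact mul_pos_of_neg_of_neg (by linarith) h'
        · exact absurd h' hs0ne
        · rw [hs1, if_pos h']
          exact mul_pos hδpos h'
      linarith
  -- spanning over ℝ
  have hspan : Submodule.span ℝ {r : n → ℝ | ∃ i, active i ∧ rowR i = r} = ⊤ := by
    by_contra hneq
    obtain ⟨φ, hφ0, hφ⟩ := Submodule.exists_dual_map_eq_bot_of_lt_top
      (lt_top_iff_ne_top.mpr hneq) inferInstance
    set h : n → ℝ := fun a => φ (Pi.single a 1) with hh
    have hφx : ∀ x : n → ℝ, φ x = x ⬝ᵥ h := by
      intro x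
      have hx : x = ∑ a, x a • (Pi.single a (1:ℝ) : n → ℝ) := by
        funext a'
        rw [Finset.sum_apply]
        simp [Pi.single_apply]
      conv_lhs => rw [hx]
      rw [map_sum]
      simp only [_root_.map_smul, smul_eq_mul]
      rfl
    have hh0 : ∀ i, active i → rowR i ⬝ᵥ h = 0 := by
      intro i hi
      rw [← hφx]
      have hmem : rowR i ∈ Submodule.span ℝ {r : n → ℝ | ∃ i, active i ∧ rowR i = r} :=
        Submodule.subset_span ⟨i, hi, rfl⟩
      have hmem2 : φ (rowR i) ∈ Submodule.map φ
          (Submodule.span ℝ {r : n → ℝ | ∃ i, active i ∧ rowR i = r}) :=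
        Submodule.mem_map_of_mem hmem
      rw [hφ] at hmem2
      simpa using hmem2
    have := hker h hh0
    apply hφ0
    apply LinearMap.ext
    intro x
    rw [hφx, this]
    simp
  obtain ⟨t, htsub, htspan, htind⟩ :=
    exists_linearIndependent ℝ {r : n → ℝ | ∃ i, active i ∧ rowR i = r}
  rw [hspan] at htspan
  have htfin : t.Finite := htind.setFinite
  haveI := htfin.fintype
  have hbasis : Module.Basis t ℝ (n → ℝ) := Module.Basis.mk htind (by rw [Subtype.range_coe]; exact htspan.ge)
  have hcardt : Fintype.card t = Fintype.card n := by
    have h1 : Module.finrank ℝ (n → ℝ) = Fintype.card t := Module.finrank_eq_card_basis hbasis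
    rw [← h1, Module.finrank_fintype_fun_eq_card]
  have hchoose : ∀ r : t, ∃ i, active i ∧ rowR i = (r : n → ℝ) := fun r => htsub r.2
  set idx : t → (n ⊕ m) := fun r => (hchoose r).choose with hidx
  have hidxspec : ∀ r : t, active (idx r) ∧ rowR (idx r) = (r : n → ℝ) :=
    fun r => (hchoose r).choose_spec
  set Ψ : (n → ℚ) →ₗ[ℚ] (t → ℚ) := LinearMap.pi (fun r => dotLin (rowq (idx r))) with hΨ
  have hrowcast : ∀ (i : n ⊕ m) (x : n → ℚ),
      ((rowq i ⬝ᵥ x : ℚ) : ℝ) = rowR i ⬝ᵥ (fun a => (x a : ℝ)) := by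
    intro i x
    rw [dot_cast]
  have hΨinj : Function.Injective Ψ := by
    rw [← LinearMap.ker_eq_bot, LinearMap.ker_eq_bot']
    intro x hx
    have hxr : ∀ r : t, (r : n → ℝ) ⬝ᵥ (fun a => (x a : ℝ)) = 0 := by
      intro r
      have h0 : rowq (idx r) ⬝ᵥ x = 0 := congrFun hx r
      have h1 : ((rowq (idx r) ⬝ᵥ x : ℚ) : ℝ) = 0 := by rw [h0]; norm_num
      rw [hrowcast] at h1
      rw [← (hidxspec r).2]
      exact h1
    have hz := eq_zero_of_dot_span (fun a => ((x a : ℝ))) htspan (fun r hr => hxr ⟨r, hr⟩)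
    funext a
    have h2 := congrFun hz a
    simp only [Pi.zero_apply] at h2
    show x a = 0
    exact_mod_cast h2
  have hΨsurj : Function.Surjective Ψ := by
    have hfr : Module.finrank ℚ (n → ℚ) = Module.finrank ℚ (t → ℚ) := by
      rw [Module.finrank_fintype_fun_eq_card, Module.finrank_fintype_fun_eq_card, hcardt]
    exact (LinearMap.injective_iff_surjective_of_finrank_eq_finrank hfr).mp hΨinj
  obtain ⟨x, hx⟩ := hΨsurj (fun r => rhsq (idx r))
  have hxr : ∀ r : t, (r : n → ℝ) ⬝ᵥ (fun a => (x a : ℝ)) = ((rhsq (idx r)) : ℝ) := by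
    intro r
    have h0 : rowq (idx r) ⬝ᵥ x = rhsq (idx r) := congrFun hx r
    have h1 : ((rowq (idx r) ⬝ᵥ x : ℚ) : ℝ) = ((rhsq (idx r) : ℚ) : ℝ) := by rw [h0]
    rw [hrowcast] at h1
    rw [← (hidxspec r).2]
    exact h1
  have hμsr : ∀ r : t, (r : n → ℝ) ⬝ᵥ μs = ((rhsq (idx r)) : ℝ) := by
    intro r
    rw [← (hidxspec r).2]
    exact heqn (idx r) (hidxspec r).1
  have hdiff : μs - (fun a => ((x a : ℝ))) = 0 := by
    apply eq_zero_of_dot_span _ htspan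
    intro r hr
    rw [dotProduct_sub, hμsr ⟨r, hr⟩, hxr ⟨r, hr⟩, sub_self]
  have hμseq : μs = fun a => ((x a : ℝ)) := by rwa [sub_eq_zero] at hdiff
  refine ⟨∑ a, x a, ?_⟩
  rw [← hμsval, hμseq]
  push_cast
  rfl

end LP

section Main
variable {d : ℕ}

lemma pair_toR_int (v : Fin d → Fin d → ℤ) (a : Fin d → ℤ) (j : Fin d) :
    pair (toR a) (toR (v j)) = ((∑ i, a i * v j i : ℤ) : ℝ) := by
  simp only [pair, toR]
  push_cast
  ring


/-- for a simplicial cone and `B` with `σ^∨ \ Q(B)` bounded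
(`J` is `m`-primary), the F-threshold `sup_{u ∈ σ^∨ \ Q(B)} λ_A(u)` is
rational. -/
theorem sup_lam_rational
    (d : ℕ) (hd : 1 ≤ d)
    (v : Fin d → Fin d → ℤ)
    (hsc : StronglyConvex v) (hprim : ∀ j, IsPrimitive (v j))
    (hli : LinearIndependent ℝ fun j => toR (v j))
    (A B : Finset (Fin d → ℤ)) (hAne : A.Nonempty) (hBne : B.Nonempty)
    (hAl : ∀ a ∈ A, toR a ∈ dualCone v) (hBl : ∀ b ∈ B, toR b ∈ dualCone v)
    (hbdd : Bornology.IsBounded (dualCone v \ QSet v B)) :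
    ∃ q : ℚ, sSup (lam v A '' (dualCone v \ QSet v B)) = (q : ℝ) := by

  classical
  have hd0 : 0 < d := hd
  set R : Set (Fin d → ℝ) := dualCone v \ QSet v B with hRdef
  have hmemR : ∀ u, u ∈ R ↔ (∀ j, 0 ≤ pair u (toR (v j))) ∧
      ∀ b ∈ B, ∃ j, pair u (toR (v j)) < pair (toR b) (toR (v j)) := by
    intro u
    rw [hRdef, Set.mem_diff, mem_dualCone_iff]
    refine and_congr Iff.rfl ?_
    constructor
    · intro hq b hb
      by_contra hno
      push_neg at hno
      exact hq ((mem_QSet_iff v B u).mpr ⟨b, hb, hno⟩)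
    · intro hall hq
      obtain ⟨b, hb, hble⟩ := (mem_QSet_iff v B u).mp hq
      obtain ⟨j, hj⟩ := hall b hb
      exact absurd (hble j) (not_le.mpr hj)
  rcases R.eq_empty_or_nonempty with hRe | hRne
  · exact ⟨0, by rw [hRe, Set.image_empty, Real.sSup_empty, Rat.cast_zero]⟩
  by_cases hA0 : (0 : Fin d → ℤ) ∈ A
  · refine ⟨0, ?_⟩
    have himg : lam v A '' R = {0} := by
      apply Set.Subset.antisymm
      · rintro y ⟨u, hu, rfl⟩
        rw [Set.mem_singleton_iff]
        exact lam_of_zero_mem v A hA0 hu.1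
      · rintro y hy
        rw [Set.mem_singleton_iff] at hy
        obtain ⟨u, hu⟩ := hRne
        exact ⟨u, hu, by rw [hy]; exact lam_of_zero_mem v A hA0 hu.1⟩
    rw [himg, csSup_singleton, Rat.cast_zero]
  -- main case: 0 ∉ A, R nonempty
  obtain ⟨C, hC⟩ := hbdd.exists_norm_le
  -- escape lemma
  have hescape : ∀ u ∈ R, ∀ j : Fin d, ∃ b ∈ B,
      pair u (toR (v j)) < pair (toR b) (toR (v j)) := by
    intro u hu j
    by_contra hno
    push_neg at hno
    obtain ⟨w, hw⟩ := Tmap_exists_preimage v hd0 hli (Pi.single j 1)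
    have hwj : pair w (toR (v j)) = 1 := by rw [hw j, Pi.single_eq_same]
    have hwne : ∀ i, i ≠ j → pair w (toR (v i)) = 0 := by
      intro i hij
      rw [hw i, Pi.single_eq_of_ne hij]
    have hray : ∀ s : ℝ, 0 ≤ s → u + s • w ∈ R := by
      intro s hs
      rw [hmemR]
      obtain ⟨hu1, hu2⟩ := (hmemR u).mp hu
      constructor
      · intro i
        rw [pair_add_left, pair_smul_left]
        by_cases hij : i = j
        · subst hij; rw [hwj]; nlinarith [hu1 i]
        · rw [hwne i hij]; simpa using hu1 i
      · intro b hb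
        obtain ⟨i, hi⟩ := hu2 b hb
        have hij : i ≠ j := by
          intro hij
          subst hij
          exact absurd (hno b hb) (not_le.mpr hi)
        refine ⟨i, ?_⟩
        rw [pair_add_left, pair_smul_left, hwne i hij, mul_zero, add_zero]
        exact hi
    have hwnz : w ≠ 0 := by
      intro hw0
      rw [hw0, pair_zero_left] at hwj
      exact one_ne_zero hwj.symm
    have hwpos : 0 < ‖w‖ := norm_pos_iff.mpr hwnz
    set s : ℝ := (C + ‖u‖ + 1) / ‖w‖ with hs
    have hC0 : 0 ≤ C := le_trans (norm_nonneg u) (hC u hu)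
    have hspos : 0 ≤ s := by positivity
    have hmem := hC _ (hray s hspos)
    have hnorm : ‖s • w‖ ≤ ‖u + s • w‖ + ‖u‖ := by
      have h := norm_sub_le (u + s • w) u
      rwa [add_sub_cancel_left] at h
    rw [norm_smul, Real.norm_eq_abs, abs_of_nonneg hspos] at hnorm
    have : s * ‖w‖ = C + ‖u‖ + 1 := by
      rw [hs, div_mul_cancel₀ _ (ne_of_gt hwpos)]
    rw [this] at hnorm
    linarith [norm_nonneg u]
  -- bounded above of LSet
  have hLbdd : ∀ x : Fin d → ℝ, BddAbove (LSet v A x) :=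
    fun x => ⟨∑ j, pair x (toR (v j)), fun l hl => LSet_le_sum v A hd0 hli hAl hA0 hl⟩
  have hlam_le : ∀ x : Fin d → ℝ, (∀ j, 0 ≤ pair x (toR (v j))) →
      lam v A x ≤ ∑ j, pair x (toR (v j)) := by
    intro x hx
    rw [lam_eq_sSup_LSet]
    exact Real.sSup_le (fun l hl => LSet_le_sum v A hd0 hli hAl hA0 hl)
      (Finset.sum_nonneg fun j _ => hx j)
  -- lam image bounded above
  have himgbdd : BddAbove (lam v A '' R) := by
    refine ⟨∑ j, C * ∑ i, |((v j i : ℤ) : ℝ)|, ?_⟩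
    rintro y ⟨u, hu, rfl⟩
    have hpb : ∀ j, pair u (toR (v j)) ≤ C * ∑ i, |((v j i : ℤ) : ℝ)| := by
      intro j
      rw [pair, Finset.mul_sum]
      refine Finset.sum_le_sum fun i _ => ?_
      have h1 : u i * toR (v j) i ≤ |u i| * |toR (v j) i| := by
        calc u i * toR (v j) i ≤ |u i * toR (v j) i| := le_abs_self _
        _ = |u i| * |toR (v j) i| := abs_mul _ _
      have h2 : |u i| ≤ C := le_trans (norm_le_pi_norm u i) (hC u hu)
      calc u i * toR (v j) i ≤ |u i| * |toR (v j) i| := h1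
      _ ≤ C * |((v j i : ℤ) : ℝ)| :=
        mul_le_mul_of_nonneg_right h2 (abs_nonneg _)
    calc lam v A u ≤ ∑ j, pair u (toR (v j)) := hlam_le u ((hmemR u).mp hu).1
    _ ≤ ∑ j, C * ∑ i, |((v j i : ℤ) : ℝ)| := Finset.sum_le_sum fun j _ => hpb j
  -- preimage function for Tmap
  obtain ⟨Pt, hPt⟩ : ∃ P : (Fin d → ℝ) → (Fin d → ℝ),
      ∀ g j, pair (P g) (toR (v j)) = g j :=
    ⟨fun g => Classical.choose (Tmap_exists_preimage v hd0 hli g),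
     fun g => Classical.choose_spec (Tmap_exists_preimage v hd0 hli g)⟩
  -- candidate corners
  set Vals : Fin d → Finset ℝ := fun j => B.image (fun b => pair (toR b) (toR (v j))) with hVals
  set goodC : Finset (Fin d → ℝ) := (Fintype.piFinset Vals).filter
    (fun g => (∀ j, 0 < g j) ∧ ∀ b ∈ B, ∃ j, g j ≤ pair (toR b) (toR (v j))) with hgoodC
  -- corner construction
  have hcorner : ∀ u ∈ R, ∃ g ∈ goodC, ∀ j, pair u (toR (v j)) ≤ g j := by
    intro u hu
    have hne : ∀ j : Fin d, ((B.filter (fun b => pair u (toR (v j)) < pair (toR b) (toR (v j)))).image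
        (fun b => pair (toR b) (toR (v j)))).Nonempty := by
      intro j
      obtain ⟨b, hb, hlt⟩ := hescape u hu j
      exact ⟨pair (toR b) (toR (v j)),
        Finset.mem_image_of_mem _ (Finset.mem_filter.mpr ⟨hb, hlt⟩)⟩
    set g : Fin d → ℝ := fun j => ((B.filter
      (fun b => pair u (toR (v j)) < pair (toR b) (toR (v j)))).image
        (fun b => pair (toR b) (toR (v j)))).min' (hne j) with hg
    have hgj : ∀ j, g j = ((B.filter
        (fun b => pair u (toR (v j)) < pair (toR b) (toR (v j)))).image
        (fun b => pair (toR b) (toR (v j)))).min' (hne j) := fun j => by rw [hg]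
    have hglt : ∀ j, pair u (toR (v j)) < g j := by
      intro j
      rw [hgj j]
      obtain ⟨b, hbf, hbeq⟩ := Finset.mem_image.mp (Finset.min'_mem _ (hne j))
      rw [← hbeq]
      exact (Finset.mem_filter.mp hbf).2
    refine ⟨g, ?_, fun j => (hglt j).le⟩
    rw [hgoodC, Finset.mem_filter]
    refine ⟨?_, ?_, ?_⟩
    · rw [Fintype.mem_piFinset]
      intro j
      rw [hgj j]
      exact Finset.image_subset_image (Finset.filter_subset _ _) (Finset.min'_mem _ (hne j))
    · intro j
      exact lt_of_le_of_lt (((hmemR u).mp hu).1 j) (hglt j)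
    · intro b hb
      obtain ⟨j, hj⟩ := ((hmemR u).mp hu).2 b hb
      refine ⟨j, ?_⟩
      rw [hgj j]
      exact Finset.min'_le _ _ (Finset.mem_image_of_mem _ (Finset.mem_filter.mpr ⟨hb, hj⟩))
  -- upper bound: lam u ≤ lam (Pt g)
  have hmono : ∀ u ∈ R, ∀ g ∈ goodC, (∀ j, pair u (toR (v j)) ≤ g j) →
      lam v A u ≤ lam v A (Pt g) := by
    intro u _ g _ hle
    rcases (LSet v A u).eq_empty_or_nonempty with hLe | hLne
    · rw [lam_eq_sSup_LSet, hLe, Real.sSup_empty]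
      exact lam_nonneg v A _
    · rw [lam_eq_sSup_LSet, lam_eq_sSup_LSet]
      apply csSup_le_csSup (hLbdd (Pt g)) hLne
      apply LSet_mono
      intro j
      rw [hPt g j]
      exact hle j
  -- lower bound: lam (Pt g) ≤ sSup (lam '' R)
  have hlower : ∀ g ∈ goodC, lam v A (Pt g) ≤ sSup (lam v A '' R) := by
    intro g hg
    rw [hgoodC, Finset.mem_filter] at hg
    obtain ⟨-, hgpos, hgle⟩ := hg
    have hstep : ∀ ε : ℝ, 0 < ε → ε < 1 → (1 - ε) * lam v A (Pt g) ≤ sSup (lam v A '' R) := by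
      intro ε hε0 hε1
      have hmemR' : (1 - ε) • Pt g ∈ R := by
        rw [hmemR]
        constructor
        · intro j
          rw [pair_smul_left, hPt g j]
          exact mul_nonneg (by linarith) (hgpos j).le
        · intro b hb
          obtain ⟨j, hj⟩ := hgle b hb
          refine ⟨j, ?_⟩
          rw [pair_smul_left, hPt g j]
          nlinarith [hgpos j]
      have := le_csSup himgbdd (Set.mem_image_of_mem (lam v A) hmemR')
      rwa [lam_smul v A (by linarith : (0:ℝ) < 1 - ε) (Pt g)] at this
    have hY0 : 0 ≤ sSup (lam v A '' R) := by
      obtain ⟨u, hu⟩ := hRne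
      exact le_trans (lam_nonneg v A u) (le_csSup himgbdd (Set.mem_image_of_mem _ hu))
    by_contra hlt
    push_neg at hlt
    set Y := sSup (lam v A '' R) with hY
    set L := lam v A (Pt g) with hL
    have hLpos : 0 < L := lt_of_le_of_lt hY0 hlt
    have hεdef : 0 < (L - Y) / (2 * L) := by
      apply div_pos (by linarith) (by linarith)
    have hεlt : (L - Y) / (2 * L) < 1 := by
      rw [div_lt_one (by linarith)]
      linarith
    have := hstep _ hεdef hεlt
    have hexp : (1 - (L - Y) / (2 * L)) * L = L - (L - Y) / 2 := by
      field_simp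
    rw [hexp] at this
    linarith
  -- the finite set of candidate values
  have hgoodCne : goodC.Nonempty := by
    obtain ⟨u, hu⟩ := hRne
    obtain ⟨g, hg, -⟩ := hcorner u hu
    exact ⟨g, hg⟩
  set valS : Finset ℝ := goodC.image (fun g => lam v A (Pt g)) with hvalS
  have hvalSne : valS.Nonempty := hgoodCne.image _
  -- sSup equals the max of valS
  have hsup_eq : sSup (lam v A '' R) = valS.max' hvalSne := by
    apply le_antisymm
    · apply csSup_le (hRne.image _)
      rintro y ⟨u, hu, rfl⟩
      obtain ⟨g, hg, hle⟩ := hcorner u hu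
      exact le_trans (hmono u hu g hg hle)
        (Finset.le_max' valS (lam v A (Pt g))
          (Finset.mem_image_of_mem (fun g => lam v A (Pt g)) hg))
    · obtain ⟨g, hg, heq⟩ := Finset.mem_image.mp (valS.max'_mem hvalSne)
      rw [← heq]
      exact hlower g hg
  -- every candidate value is rational
  have hrat : ∀ g ∈ goodC, ∃ q : ℚ, lam v A (Pt g) = (q : ℝ) := by
    intro g hg
    rw [hgoodC, Finset.mem_filter] at hg
    obtain ⟨hgmem, hgpos, hgle⟩ := hg
    rw [Fintype.mem_piFinset] at hgmem
    -- rational data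
    have hbq : ∀ j : Fin d, ∃ z : ℤ, g j = (z : ℝ) := by
      intro j
      have := hgmem j
      rw [hVals, Finset.mem_image] at this
      obtain ⟨b, hb, hbeq⟩ := this
      exact ⟨∑ i, b i * v j i, by rw [← hbeq, pair_toR_int]⟩
    choose zb hzb using hbq
    set Mq : Fin d → {a // a ∈ A} → ℚ := fun j a => ((∑ i, a.1 i * v j i : ℤ) : ℚ) with hMq
    set bq : Fin d → ℚ := fun j => ((zb j : ℤ) : ℚ) with hbqdef
    have hMcast : ∀ (j : Fin d) (a : {a // a ∈ A}),
        ((Mq j a : ℚ) : ℝ) = pair (toR a.1) (toR (v j)) := by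
      intro j a
      rw [pair_toR_int, hMq]
      push_cast
      ring
    have hbcast : ∀ j, ((bq j : ℚ) : ℝ) = g j := by
      intro j
      rw [hbqdef, hzb j]
      push_cast
      ring
    have hMpos : ∀ (j : Fin d) (a : {a // a ∈ A}), 0 ≤ Mq j a := by
      intro j a
      have h1 : (0:ℝ) ≤ ((Mq j a : ℚ) : ℝ) := by
        rw [hMcast]
        exact (mem_dualCone_iff v _).mp (hAl a.1 a.2) j
      exact_mod_cast h1
    have hbpos : ∀ j, 0 ≤ bq j := by
      intro j
      have h1 : (0:ℝ) ≤ ((bq j : ℚ) : ℝ) := by rw [hbcast]; exact (hgpos j).le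
      exact_mod_cast h1
    have hcol : ∀ a : {a // a ∈ A}, 1 ≤ ∑ j, Mq j a := by
      intro a
      have h1 : (1:ℝ) ≤ ∑ j, ((Mq j a : ℚ) : ℝ) := by
        calc (1:ℝ) ≤ ∑ j, pair (toR a.1) (toR (v j)) :=
          colsum_ge_one v A hd0 hli hAl hA0 a.1 a.2
        _ = ∑ j, ((Mq j a : ℚ) : ℝ) := Finset.sum_congr rfl fun j _ => (hMcast j a).symm
      have h2 : ((∑ j, Mq j a : ℚ) : ℝ) = ∑ j, ((Mq j a : ℚ) : ℝ) := by push_cast; ring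
      rw [← h2] at h1
      exact_mod_cast h1
    -- identify LSet with the LP feasible values
    have hseteq : LSet v A (Pt g) = {l : ℝ | 0 < l ∧ ∃ μ : {a // a ∈ A} → ℝ,
        (∀ a, 0 ≤ μ a) ∧ (∀ j, ∑ a, μ a * ((Mq j a : ℚ) : ℝ) ≤ ((bq j : ℚ) : ℝ)) ∧
        (∑ a, μ a = l)} := by
      ext l
      rw [mem_LSet_iff, Set.mem_setOf_eq]
      constructor
      · rintro ⟨hl, c, hc0, hc1, hcj⟩
        refine ⟨hl, fun a => l * c a.1, fun a => mul_nonneg hl.le (hc0 a.1 a.2), ?_, ?_⟩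
        · intro j
          have hsum : ∑ a : {a // a ∈ A}, l * c a.1 * ((Mq j a : ℚ) : ℝ)
              = l * ∑ a ∈ A, c a * pair (toR a) (toR (v j)) := by
            rw [Finset.mul_sum, ← Finset.sum_coe_sort A
              (fun a => l * (c a * pair (toR a) (toR (v j))))]
            refine Finset.sum_congr rfl fun a _ => ?_
            rw [hMcast j a]
            ring
          rw [hsum, hbcast j]
          have hcj' := hcj j
          rwa [hPt g j] at hcj'
        · rw [Finset.sum_coe_sort A (fun a => l * c a), ← Finset.mul_sum, hc1, mul_one]
      · rintro ⟨hl, μ, hμ0, hμj, hμsum⟩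
        have hlne : l ≠ 0 := ne_of_gt hl
        set c : (Fin d → ℤ) → ℝ := fun a => if h : a ∈ A then μ ⟨a, h⟩ / l else 0 with hcdef
        have hcval : ∀ a : {a // a ∈ A}, c a.1 = μ a / l := by
          intro a
          rw [hcdef]
          simp only [a.2, dif_pos]
        refine ⟨hl, c, ?_, ?_, ?_⟩
        · intro a ha
          have : c a = μ ⟨a, ha⟩ / l := hcval ⟨a, ha⟩
          rw [this]
          exact div_nonneg (hμ0 _) hl.le
        · have h1 : ∑ a ∈ A, c a = ∑ a : {a // a ∈ A}, μ a / l := by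
            rw [← Finset.sum_coe_sort A c]
            exact Finset.sum_congr rfl fun a _ => hcval a
          rw [h1, ← Finset.sum_div, hμsum, div_self hlne]
        · intro j
          rw [hPt g j]
          have hsum2 : l * ∑ a ∈ A, c a * pair (toR a) (toR (v j))
              = ∑ a : {a // a ∈ A}, μ a * ((Mq j a : ℚ) : ℝ) := by
            rw [Finset.mul_sum, ← Finset.sum_coe_sort A
              (fun a => l * (c a * pair (toR a) (toR (v j))))]
            refine Finset.sum_congr rfl fun a _ => ?_
            rw [hcval a, hMcast j a]
            field_simp
          rw [hsum2, ← hbcast j]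
          exact hμj j
    rw [lam_eq_sSup_LSet, hseteq]
    exact lp_rational Mq bq hMpos hbpos hcol
  obtain ⟨g, hg, heq⟩ := Finset.mem_image.mp (valS.max'_mem hvalSne)
  obtain ⟨q, hq⟩ := hrat g hg
  refine ⟨q, ?_⟩
  rw [hsup_eq, ← heq, hq]

end Main

end Paper
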